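/- The Whitehead link holonomy generators satisfy: G₁ and G₃ have trace 2+i and are loxodromic (they have an eigenvalue of modulus ≠ 1), while G₂ and G₄ have trace -1-2i and satisfy G₂⁴ = identity and G₄⁴ = identity in PU(2,1) (i.e., their fourth powers are scalar matrices). -/

import Mathlib

open Complex Matrix

noncomputable section

def W₁ : Matrix (Fin 3) (Fin 3) ℂ :=
  !![1, 0, -Complex.I;
     -1 - Complex.I, 1, -1 + Complex.I;
     -1 - Complex.I, 1 - Complex.I, Complex.I]

def W₂ : Matrix (Fin 3) (Fin 3) ℂ :=
  !![1, 1 - Complex.I, -1 + Complex.I;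
     -1 - Complex.I, -1, 1 - Complex.I;
     -1 + Complex.I, 1 + Complex.I, -1 - 2 * Complex.I]

def W₃ : Matrix (Fin 3) (Fin 3) ℂ :=
  !![Complex.I, 1 + Complex.I, -Complex.I;
     1 - Complex.I, -1 - 2 * Complex.I, 2 * Complex.I;
     -1 - Complex.I, -3 + Complex.I, 3 + 2 * Complex.I]

def W₄ : Matrix (Fin 3) (Fin 3) ℂ :=
  !![-Complex.I, 0, 0;
     -1 + Complex.I, -1, 0;
     -1 + Complex.I, -1 + Complex.I, -Complex.I]

/-- `M` is loxodromic: it has an eigenvalue of modulus different from one. -/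
def Loxodromic (M : Matrix (Fin 3) (Fin 3) ℂ) : Prop :=
  ∃ μ : ℂ, M.charpoly.IsRoot μ ∧ ‖μ‖ ≠ 1

lemma diag3 (μ : ℂ) :
    Matrix.diagonal (fun _ : Fin 3 => μ) = !![μ,0,0; 0,μ,0; 0,0,μ] := by
  ext i j
  fin_cases i <;> fin_cases j <;> rfl

lemma eval_charpoly_eq (M : Matrix (Fin 3) (Fin 3) ℂ) (μ : ℂ) :
    M.charpoly.eval μ = (Matrix.diagonal (fun _ => μ) - M).det := by
  rw [Matrix.charpoly, ← Polynomial.coe_evalRingHom, RingHom.map_det]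
  congr 1
  ext i j
  simp [Matrix.charmatrix_apply, Matrix.map_apply, Matrix.diagonal,
    Matrix.sub_apply, apply_ite (Polynomial.eval μ)]

lemma hs2 : ((Real.sqrt 2 : ℝ) : ℂ) ^ 2 = 2 := by
  norm_cast
  rw [Real.sq_sqrt] <;> norm_num

lemma cubic_root :
    let s : ℂ := ((Real.sqrt 2 : ℝ) : ℂ)
    let μ : ℂ := (1 + Complex.I) * (2 + s) / 2
    μ ^ 3 - (2 + Complex.I) * μ ^ 2 + (2 - Complex.I) * μ - 1 = 0 := by
  intro s μ
  have hs : s ^ 2 = 2 := hs2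
  have hI : Complex.I ^ 2 = -1 := Complex.I_sq
  show ((1 + Complex.I) * (2 + s) / 2) ^ 3
      - (2 + Complex.I) * ((1 + Complex.I) * (2 + s) / 2) ^ 2
      + (2 - Complex.I) * ((1 + Complex.I) * (2 + s) / 2) - 1 = 0
  linear_combination (1/4 + Complex.I + (5/4) * Complex.I^2 + (1/8) * s
      + (3/8) * s * Complex.I + (3/8) * s * Complex.I^2 + (1/2) * Complex.I^3
      + (1/8) * s * Complex.I^3) * hs +
    (1/2 + (3/4) * s * Complex.I + (3/4) * s + Complex.I) * hI

lemma abs_mu_ne_one :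
    ‖(1 + Complex.I) * (2 + ((Real.sqrt 2 : ℝ) : ℂ)) / 2‖ ≠ 1 := by
  intro h
  have h2 : Complex.normSq ((1 + Complex.I) * (2 + ((Real.sqrt 2 : ℝ) : ℂ)) / 2)
      = (2 + Real.sqrt 2) ^ 2 / 2 := by
    simp [Complex.normSq_apply, Complex.div_re, Complex.div_im, Complex.normSq_apply]
    ring
  have h3 : ‖(1 + Complex.I) * (2 + ((Real.sqrt 2 : ℝ) : ℂ)) / 2‖ ^ 2
      = (2 + Real.sqrt 2) ^ 2 / 2 := by
    rw [Complex.sq_norm, h2]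
  rw [h, one_pow] at h3
  nlinarith [Real.sqrt_nonneg 2]

lemma lox_of_charpoly (M : Matrix (Fin 3) (Fin 3) ℂ)
    (h : ∀ μ : ℂ, (Matrix.diagonal (fun _ => μ) - M).det
      = μ ^ 3 - (2 + Complex.I) * μ ^ 2 + (2 - Complex.I) * μ - 1) :
    Loxodromic M := by
  refine ⟨(1 + Complex.I) * (2 + ((Real.sqrt 2 : ℝ) : ℂ)) / 2, ?_, abs_mu_ne_one⟩
  unfold Polynomial.IsRoot
  rw [eval_charpoly_eq, h]
  exact cubic_root

set_option maxHeartbeats 2000000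

/-- `G₁` and `G₃` have trace `2+i` and are loxodromic; `G₂` and `G₄` have trace
`-1-2i` and their fourth powers are scalar matrices (order four in `PU(2,1)`). -/
theorem whitehead_generators_types :
    (W₁.trace = 2 + Complex.I ∧ Loxodromic W₁) ∧
    (W₃.trace = 2 + Complex.I ∧ Loxodromic W₃) ∧
    (W₂.trace = -1 - 2 * Complex.I ∧ ∃ c : ℂ, W₂ ^ 4 = c • (1 : Matrix (Fin 3) (Fin 3) ℂ)) ∧
    (W₄.trace = -1 - 2 * Complex.I ∧ ∃ c : ℂ, W₄ ^ 4 = c • (1 : Matrix (Fin 3) (Fin 3) ℂ)) := by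
  refine ⟨⟨?_, ?_⟩, ⟨?_, ?_⟩, ⟨?_, ?_⟩, ⟨?_, ?_⟩⟩
  · simp [W₁, Matrix.trace_fin_three]; norm_num
  · apply lox_of_charpoly
    intro μ
    rw [diag3]
    simp only [W₁, Matrix.det_fin_three, Matrix.sub_apply, Matrix.cons_val', Matrix.cons_val_zero,
      Matrix.cons_val_one, Matrix.head_cons, Matrix.head_fin_const, Matrix.empty_val',
      Matrix.cons_val_fin_one, Matrix.cons_val_two, Matrix.tail_cons, Matrix.of_apply]
    linear_combination Complex.I * Complex.I_sq
  · simp [W₃, Matrix.trace_fin_three]; ring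
  · apply lox_of_charpoly
    intro μ
    rw [diag3]
    simp only [W₃, Matrix.det_fin_three, Matrix.sub_apply, Matrix.cons_val', Matrix.cons_val_zero,
      Matrix.cons_val_one, Matrix.head_cons, Matrix.head_fin_const, Matrix.empty_val',
      Matrix.cons_val_fin_one, Matrix.cons_val_two, Matrix.tail_cons, Matrix.of_apply]
    linear_combination (4 + 3 * Complex.I - 6 * μ) * Complex.I_sq
  · simp [W₂, Matrix.trace_fin_three]
  · refine ⟨1, ?_⟩
    rw [one_smul]
    have h4 : W₂ ^ 4 = (W₂ * W₂) * (W₂ * W₂) := by rw [show (4:ℕ) = 2*2 by rfl, pow_mul, sq, sq]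
    rw [h4]
    ext i j
    fin_cases i <;> fin_cases j <;>
      simp [W₂, Matrix.mul_apply, Fin.sum_univ_three, Matrix.one_apply, Complex.ext_iff] <;>
      norm_num
  · simp [W₄, Matrix.trace_fin_three]; ring
  · refine ⟨1, ?_⟩
    rw [one_smul]
    have h4 : W₄ ^ 4 = (W₄ * W₄) * (W₄ * W₄) := by rw [show (4:ℕ) = 2*2 by rfl, pow_mul, sq, sq]
    rw [h4]
    ext i j
    fin_cases i <;> fin_cases j <;>
      simp [W₄, Matrix.mul_apply, Fin.sum_univ_three, Matrix.one_apply, Complex.ext_iff] <;>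
      norm_num

end
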